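/- Let b ≥ 2 and d ≥ 1 be integers such that (b,d) ≠ (2,1), (b,d) ≠ (2,6), and (b,d) ≠ (2^a − 1, 2) for every positive integer a. Then there exists a prime p with p > d and p ∣ Φ_d(b), where Φ_d denotes the d-th cyclotomic polynomial. -/

import Mathlib

open Polynomial Finset

-- nat inequality: n + 4 ≤ 2 ^ (n + 2)
lemma aux_pow2 : ∀ n : ℕ, n + 4 ≤ 2 ^ (n + 2) := by
  intro n
  induction n with
  | zero => norm_num
  | succ k ih => rw [pow_succ]; omega

lemma aux_pow3 : ∀ n : ℕ, n + 2 ≤ 2 * 3 ^ n := by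
  intro n
  induction n with
  | zero => norm_num
  | succ k ih => rw [pow_succ]; nlinarith [ih]

lemma E1 {p : ℕ} (hp : p.Prime) : ∀ (j : ℕ) (n : ℕ) (b : ℤ), p ∣ n →
    (cyclotomic (p ^ j * n) ℤ).eval b = (cyclotomic n ℤ).eval (b ^ p ^ j) := by
  intro j
  induction j with
  | zero => intro n b _; simp
  | succ j ih =>
    intro n b h
    have h2 : p ∣ p ^ j * n := Dvd.dvd.mul_left h _
    have harith : p ^ (j + 1) * n = p ^ j * n * p := by rw [pow_succ]; ring
    rw [harith, ← cyclotomic_expand_eq_cyclotomic hp h2, expand_eval, ih n (b ^ p) h,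
      ← pow_mul, ← pow_succ']

lemma E2 {p m : ℕ} (hp : p.Prime) (hm : ¬ p ∣ m) (c : ℤ) :
    (cyclotomic m ℤ).eval (c ^ p) =
      (cyclotomic (m * p) ℤ).eval c * (cyclotomic m ℤ).eval c := by
  rw [← expand_eval, cyclotomic_expand_eq_cyclotomic_mul hp hm, eval_mul]

lemma ordCompl_facts (b : ℤ) {d p : ℕ} (hd : 0 < d) (hp : p.Prime)
    (hdvd : (p : ℤ) ∣ (cyclotomic d ℤ).eval b) :
    (b : ZMod p) ≠ 0 ∧ IsPrimitiveRoot (b : ZMod p) (d / p ^ d.factorization p) ∧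
      (d / p ^ d.factorization p) ∣ p - 1 := by
  haveI : Fact p.Prime := ⟨hp⟩
  have h0 : (((cyclotomic d ℤ).eval b : ℤ) : ZMod p) = 0 :=
    (ZMod.intCast_zmod_eq_zero_iff_dvd _ p).mpr hdvd
  have hroot : IsRoot (cyclotomic d (ZMod p)) ((b : ℤ) : ZMod p) := by
    have := cyclotomic.eval_apply (R := ℤ) b d (Int.castRingHom (ZMod p))
    simp only [Int.coe_castRingHom] at this
    rw [IsRoot.def, this, h0]
  haveI : NeZero (((d / p ^ d.factorization p) : ℕ) : ZMod p) :=
    NeZero.of_not_dvd (ZMod p) (Nat.not_dvd_ordCompl hp hd.ne')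
  have hd' : p ^ d.factorization p * (d / p ^ d.factorization p) = d :=
    Nat.ordProj_mul_ordCompl_eq_self d p
  have hprim : IsPrimitiveRoot ((b : ℤ) : ZMod p) (d / p ^ d.factorization p) := by
    rw [← isRoot_cyclotomic_prime_pow_mul_iff_of_charP (p := p) (k := d.factorization p)]
    rw [hd']
    exact hroot
  have hm0 : (d / p ^ d.factorization p) ≠ 0 := (Nat.ordCompl_pos p hd.ne').ne'
  have hne : ((b : ℤ) : ZMod p) ≠ 0 := hprim.ne_zero hm0
  refine ⟨hne, hprim, ?_⟩
  have := ZMod.orderOf_dvd_card_sub_one hne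
  rwa [← hprim.eq_orderOf] at this

lemma sq_not_dvd_geom_sum_odd {p : ℕ} (hp : p.Prime) (hodd : Odd p) {u : ℤ}
    (hu : (p : ℤ) ∣ u - 1) : ¬ ((p : ℤ) ^ 2 ∣ ∑ i ∈ Finset.range p, u ^ i) := by
  obtain ⟨e, he⟩ := hu
  have hu' : u = 1 + p * e := by linarith
  have key : ∀ i : ℕ, ∃ z : ℤ, u ^ i = 1 + i * (p * e) + p ^ 2 * z := by
    intro i
    induction i with
    | zero => exact ⟨0, by simp⟩
    | succ n ih =>
      obtain ⟨z, hz⟩ := ih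
      refine ⟨n * e ^ 2 + z + p * z * e, ?_⟩
      rw [pow_succ, hz, hu']
      push_cast
      ring
  choose z hz using key
  have hsum : ∑ i ∈ Finset.range p, u ^ i =
      (p : ℤ) + (p * e) * (∑ i ∈ Finset.range p, (i : ℤ)) +
        p ^ 2 * (∑ i ∈ Finset.range p, z i) := by
    rw [Finset.sum_congr rfl (fun i _ => hz i), Finset.sum_add_distrib,
      Finset.sum_add_distrib, Finset.sum_const, Finset.card_range, ← Finset.sum_mul,
      ← Finset.mul_sum]
    ring
  obtain ⟨w, hw⟩ := hodd
  have hsum2 : (∑ i ∈ Finset.range p, i) = p * w := by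
    have h2 := Finset.sum_range_id_mul_two p
    have h3 : p - 1 = 2 * w := by omega
    rw [h3] at h2
    have h4 : p * (2 * w) = p * w * 2 := by ring
    omega
  have hsumZ : (∑ i ∈ Finset.range p, (i : ℤ)) = (p : ℤ) * w := by
    rw [← Nat.cast_sum]
    exact_mod_cast congrArg (Nat.cast (R := ℤ)) hsum2
  intro hdvd
  rw [hsum, hsumZ] at hdvd
  obtain ⟨Z, hZ⟩ := hdvd
  have : (p : ℤ) ^ 2 ∣ (p : ℤ) :=
    ⟨Z - (e * w + ∑ i ∈ Finset.range p, z i), by linear_combination hZ⟩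
  have hple : (p : ℤ) ^ 2 ≤ p := Int.le_of_dvd (by exact_mod_cast hp.pos) this
  have : (2 : ℤ) ≤ p := by exact_mod_cast hp.two_le
  nlinarith

/-- **Lemma 3.7.** Let `b ≥ 2` and `d ≥ 1` be integers with `(b,d) ≠ (2,1)`,
`(b,d) ≠ (2,6)` and `(b,d) ≠ (2^a - 1, 2)` for every positive integer `a`. Then `Φ_d(b)` has
a prime divisor `p > d`. -/
theorem stmt_8 (b : ℤ) (d : ℕ) (hb : 2 ≤ b) (hd : 1 ≤ d)
    (h1 : ¬(b = 2 ∧ d = 1)) (h2 : ¬(b = 2 ∧ d = 6))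
    (h3 : ¬(d = 2 ∧ ∃ a : ℕ, 0 < a ∧ b = 2 ^ a - 1)) :
    ∃ p : ℕ, p.Prime ∧ d < p ∧ (p : ℤ) ∣ (cyclotomic d ℤ).eval b := by
  by_contra hcon
  push_neg at hcon
  have hd0 : 0 < d := hd
  -- case d = 1
  rcases eq_or_lt_of_le hd with hd1 | hd2
  · have hb3 : 3 ≤ b := by
      rcases lt_or_eq_of_le hb with h | h
      · omega
      · exact absurd ⟨h.symm, hd1.symm⟩ h1
    have hN1 : (cyclotomic d ℤ).eval b = b - 1 := by rw [← hd1]; simp [cyclotomic_one]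
    have habs : (((b - 1).natAbs : ℤ)) = b - 1 := Int.natAbs_of_nonneg (by omega)
    have hq2 : 2 ≤ (b - 1).natAbs := by omega
    have hmf := Nat.minFac_prime (show (b - 1).natAbs ≠ 1 by omega)
    refine hcon (b - 1).natAbs.minFac hmf (by have := hmf.two_le; omega) ?_
    rw [hN1]
    exact dvd_trans (Int.natCast_dvd_natCast.mpr (Nat.minFac_dvd _))
      (Int.natAbs_dvd.mpr dvd_rfl)
  -- case d = 2
  by_cases hdeq2 : d = 2
  · subst hdeq2
    have hN2 : (cyclotomic 2 ℤ).eval b = b + 1 := by simp [cyclotomic_two]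
    have habs : (((b + 1).natAbs : ℤ)) = b + 1 := Int.natAbs_of_nonneg (by omega)
    have h3abs : 3 ≤ (b + 1).natAbs := by omega
    have hall : ∀ {q : ℕ}, q.Prime → q ∣ (b + 1).natAbs → q = 2 := by
      intro q hq hq'
      by_contra hne
      have hq3 : 2 < q := by have := hq.two_le; omega
      refine hcon q hq hq3 ?_
      rw [hN2]
      exact dvd_trans (Int.natCast_dvd_natCast.mpr hq') (Int.natAbs_dvd.mpr dvd_rfl)
    have hfact := Nat.eq_prime_pow_of_unique_prime_dvd
      (show (b + 1).natAbs ≠ 0 by omega) hall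
    set L := (b + 1).natAbs.primeFactorsList.length with hLdef
    have hL : 0 < L := by
      rcases Nat.eq_zero_or_pos L with h | h
      · rw [h, pow_zero] at hfact; omega
      · exact h
    refine h3 ⟨rfl, L, hL, ?_⟩
    have hcast : ((2 ^ L : ℕ) : ℤ) = (2 : ℤ) ^ L := by push_cast; ring
    have : ((b + 1).natAbs : ℤ) = ((2 ^ L : ℕ) : ℤ) := by rw [hfact]
    rw [habs, hcast] at this
    linarith
  have hd3 : 3 ≤ d := by omega
  -- general case
  set N := (cyclotomic d ℤ).eval b with hNdef
  have hNpos : 0 < N := cyclotomic_pos' d (by omega : (1:ℤ) < b)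
  have hbt : ((b.toNat : ℤ)) = b := Int.toNat_of_nonneg (by omega)
  have hNAbs : 2 ≤ N.natAbs := by
    have h := sub_one_lt_natAbs_cyclotomic_eval (n := d) (q := b.toNat) hd2 (by omega)
    rw [hbt] at h
    omega
  have hp : N.natAbs.minFac.Prime := Nat.minFac_prime (by omega)
  set p := N.natAbs.minFac with hpdef
  haveI : Fact p.Prime := ⟨hp⟩
  have habsdvd : ((N.natAbs : ℤ)) ∣ N := Int.natAbs_dvd.mpr dvd_rfl
  have hpN : (p : ℤ) ∣ N :=
    dvd_trans (Int.natCast_dvd_natCast.mpr (Nat.minFac_dvd _)) habsdvd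
  obtain ⟨hbne, hprim, hmdvd⟩ := ordCompl_facts b hd0 hp hpN
  have hqd : ∀ q : ℕ, q.Prime → (q : ℤ) ∣ N → q ∣ d := by
    intro q hq hqN
    by_contra hnd
    obtain ⟨-, -, hm'⟩ := ordCompl_facts b hd0 hq hqN
    rw [Nat.factorization_eq_zero_of_not_dvd hnd, pow_zero, Nat.div_one] at hm'
    have := Nat.le_of_dvd (by have := hq.two_le; omega) hm'
    exact hcon q hq (by omega) hqN
  have hpd : p ∣ d := hqd p hp hpN
  have huniq : ∀ {q : ℕ}, q.Prime → q ∣ N.natAbs → q = p := by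
    intro q hq hq'
    have hqN : (q : ℤ) ∣ N := dvd_trans (Int.natCast_dvd_natCast.mpr hq') habsdvd
    by_contra hne
    have hqd' : q ∣ d := hqd q hq hqN
    obtain ⟨-, -, hmq⟩ := ordCompl_facts b hd0 hq hqN
    have hpq' : Nat.Coprime p (q ^ d.factorization q) :=
      Nat.Coprime.pow_right _ ((Nat.coprime_primes hp hq).mpr (fun h => hne h.symm))
    have hditq : p ∣ q ^ d.factorization q * (d / q ^ d.factorization q) := by
      rw [Nat.ordProj_mul_ordCompl_eq_self]; exact hpd
    have h5 : p ∣ d / q ^ d.factorization q := hpq'.dvd_of_dvd_mul_left hditq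
    have hqp' : Nat.Coprime q (p ^ d.factorization p) :=
      Nat.Coprime.pow_right _ ((Nat.coprime_primes hq hp).mpr hne)
    have hditp : q ∣ p ^ d.factorization p * (d / p ^ d.factorization p) := by
      rw [Nat.ordProj_mul_ordCompl_eq_self]; exact hqd'
    have h6 : q ∣ d / p ^ d.factorization p := hqp'.dvd_of_dvd_mul_left hditp
    have e1 : p ≤ q - 1 := Nat.le_of_dvd (by have := hq.two_le; omega) (h5.trans hmq)
    have e2 : q ≤ p - 1 := Nat.le_of_dvd (by have := hp.two_le; omega) (h6.trans hmdvd)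
    omega
  set k := d.factorization p with hkdef
  set m := d / p ^ k with hmdef
  have hdkm : p ^ k * m = d := Nat.ordProj_mul_ordCompl_eq_self d p
  have hk1 : 1 ≤ k := hp.factorization_pos_of_dvd hd0.ne' hpd
  have hm0 : 0 < m := Nat.ordCompl_pos p hd0.ne'
  have hpm : ¬ p ∣ m := Nat.not_dvd_ordCompl hp hd0.ne'
  set t := p ^ (k - 1) * m with htdef
  have hdt : d = p * t := by
    have hkk : k - 1 + 1 = k := by omega
    rw [htdef, ← mul_assoc, ← pow_succ', hkk, hdkm]
  have ht0 : 0 < t := Nat.mul_pos (pow_pos hp.pos _) hm0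
  have htlt : t < d := by
    have := hp.two_le
    rw [hdt]; nlinarith
  have hβt : ((b : ℤ) : ZMod p) ^ t = 1 := by
    have hmt : m ∣ t := dvd_mul_left m _
    rw [← orderOf_dvd_iff_pow_eq_one, ← hprim.eq_orderOf]
    exact hmt
  have hpu : (p : ℤ) ∣ b ^ t - 1 := by
    have : ((b ^ t - 1 : ℤ) : ZMod p) = 0 := by push_cast; rw [hβt]; ring
    exact (ZMod.intCast_zmod_eq_zero_iff_dvd _ _).mp this
  have hbt1 : (1 : ℤ) < b ^ t := one_lt_pow₀ (by omega : (1:ℤ) < b) ht0.ne'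
  have htd : t ∈ d.properDivisors :=
    Nat.mem_properDivisors.mpr ⟨⟨p, by rw [hdt, mul_comm]⟩, htlt⟩
  have hpoly := X_pow_sub_one_mul_cyclotomic_dvd_X_pow_sub_one_of_dvd ℤ htd
  have heval : ((b ^ t - 1) * N) ∣ b ^ d - 1 := by
    have := Polynomial.eval_dvd (x := b) hpoly
    simpa using this
  have hgeom : (b ^ t - 1) * (∑ i ∈ Finset.range p, (b ^ t) ^ i) = b ^ d - 1 := by
    rw [mul_comm, geom_sum_mul, ← pow_mul, mul_comm t p, ← hdt]
  have hNS : N ∣ ∑ i ∈ Finset.range p, (b ^ t) ^ i := by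
    rw [← hgeom] at heval
    exact (mul_dvd_mul_iff_left (by linarith : (b ^ t - 1) ≠ 0)).mp heval
  have hp2 : ¬ ((p : ℤ) ^ 2 ∣ N) := by
    intro hsq
    have hsqS : (p : ℤ) ^ 2 ∣ ∑ i ∈ Finset.range p, (b ^ t) ^ i := hsq.trans hNS
    rcases hp.eq_two_or_odd' with h2' | hodd
    · have hm1 : m = 1 := Nat.dvd_one.mp (by simpa [h2'] using hmdvd)
      have hk2 : 2 ≤ k := by
        by_contra hkk
        have hkk1 : k = 1 := by omega
        have : d = 2 := by rw [← hdkm, hkk1, hm1, h2', pow_one, mul_one]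
        omega
      obtain ⟨s, hs⟩ : ∃ s, t = 2 * s := by
        refine ⟨2 ^ (k - 2) * m, ?_⟩
        rw [htdef, h2']
        have : k - 1 = (k - 2) + 1 := by omega
        rw [this, pow_succ]
        ring
      have hbodd : ¬ (2 : ℤ) ∣ b := by
        intro h
        apply hbne
        refine (ZMod.intCast_zmod_eq_zero_iff_dvd b p).mpr ?_
        rw [h2']; exact_mod_cast h
      have hodd' : Odd (b ^ s) := by
        apply Odd.pow
        rcases Int.even_or_odd b with h | h
        · exact absurd h.two_dvd hbodd
        · exact h
      obtain ⟨w, hw⟩ := hodd'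
      have hu : b ^ t = (2 * w + 1) ^ 2 := by
        rw [hs, mul_comm 2 s, pow_mul, hw]
      have hS : ∑ i ∈ Finset.range p, (b ^ t) ^ i = 4 * (w ^ 2 + w) + 2 := by
        rw [h2']
        rw [Finset.sum_range_succ, Finset.sum_range_one, hu]
        ring
      rw [hS, h2'] at hsqS
      obtain ⟨Z, hZ⟩ := hsqS
      have : (4 : ℤ) ∣ 2 := ⟨Z - (w ^ 2 + w), by push_cast at hZ ⊢; linear_combination hZ⟩
      norm_num at this
    · exact sq_not_dvd_geom_sum_odd hp hodd hpu hsqS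
  have hfact := Nat.eq_prime_pow_of_unique_prime_dvd (show N.natAbs ≠ 0 by omega) huniq
  set L := N.natAbs.primeFactorsList.length with hLdef
  have hL1 : L = 1 := by
    have hL0 : L ≠ 0 := by
      intro h; rw [h, pow_zero] at hfact; omega
    by_contra hne
    have hL2 : 2 ≤ L := by omega
    apply hp2
    have hdvd2 : (p : ℤ) ^ 2 ∣ ((N.natAbs : ℤ)) := by
      rw [hfact]
      push_cast
      exact pow_dvd_pow _ hL2
    exact hdvd2.trans habsdvd
  have hNp : N = p := by
    have : N.natAbs = p := by rw [hfact, hL1, pow_one]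
    omega
  -- final size contradiction
  set c := b ^ (p ^ (k - 1)) with hcdef
  have hbc : b ≤ c := le_self_pow₀ (by omega) (pow_pos hp.pos _).ne'
  have hc2 : (2 : ℤ) ≤ c := by omega
  have hceval : (cyclotomic (m * p) ℤ).eval c = (p : ℤ) := by
    have harg : p ^ (k - 1) * (m * p) = d := by
      have hkk : k - 1 + 1 = k := by omega
      calc p ^ (k - 1) * (m * p) = p ^ (k - 1) * p * m := by ring
        _ = p ^ k * m := by rw [← pow_succ, hkk]
        _ = d := hdkm
    have hE := E1 hp (k - 1) (m * p) b (dvd_mul_left p m)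
    rw [harg] at hE
    rw [← hcdef] at hE
    rw [← hE, ← hNdef, hNp]
  have hsplit : (cyclotomic m ℤ).eval (c ^ p) = (p : ℤ) * (cyclotomic m ℤ).eval c := by
    rw [E2 hp hpm c, hceval]
  rcases eq_or_lt_of_le (show 1 ≤ m from hm0) with hm1 | hm2
  · -- m = 1
    rw [← hm1] at hsplit
    simp only [cyclotomic_one, eval_sub, eval_X, eval_one] at hsplit
    have hcp1 : c ^ (p - 1) * c = c ^ p := by
      rw [← pow_succ]; congr 1; have := hp.two_le; omega
    have hcpow1 : (1 : ℤ) ≤ c ^ (p - 1) := one_le_pow₀ (by omega)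
    have hple : c ^ (p - 1) ≤ (p : ℤ) := by nlinarith
    rcases hp.eq_two_or_odd' with h2' | hodd
    · rw [h2'] at hple
      norm_num at hple
      have hb2 : b = 2 := by omega
      apply hbne
      refine (ZMod.intCast_zmod_eq_zero_iff_dvd b p).mpr ?_
      rw [h2', hb2]; norm_num
    · have hp3 : 3 ≤ p := by
        obtain ⟨w, hw⟩ := hodd; have := hp.two_le; omega
      have h2p : (2 : ℤ) ^ (p - 1) ≤ c ^ (p - 1) :=
        pow_le_pow_left₀ (by norm_num) hc2 _
      have hnat : p + 1 ≤ 2 ^ (p - 1) := by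
        have h := aux_pow2 (p - 3)
        have e1 : p - 3 + 2 = p - 1 := by omega
        have e2 : p - 3 + 4 = p + 1 := by omega
        rw [e1, e2] at h
        exact h
      have hcast : ((p : ℤ) + 1) ≤ (2 : ℤ) ^ (p - 1) := by exact_mod_cast hnat
      linarith
  · -- 2 ≤ m
    have hp3 : 3 ≤ p := by
      have h2 := Nat.le_of_dvd (by have := hp.two_le; omega) hmdvd
      have := hp.two_le; omega
    have hcR : (1 : ℝ) < (c : ℝ) := by exact_mod_cast (by omega : (1 : ℤ) < c)
    have hcpR : (1 : ℝ) < ((c : ℝ)) ^ p := one_lt_pow₀ hcR (by omega)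
    have hlow := sub_one_pow_totient_lt_cyclotomic_eval (n := m) (q := ((c : ℝ)) ^ p) hm2 hcpR
    have hup := cyclotomic_eval_le_add_one_pow_totient hcR m
    have hcast : (cyclotomic m ℝ).eval (((c : ℝ)) ^ p)
        = (p : ℝ) * (cyclotomic m ℝ).eval ((c : ℝ)) := by
      have e1 := cyclotomic.eval_apply (R := ℤ) (c ^ p) m (Int.castRingHom ℝ)
      have e2 := cyclotomic.eval_apply (R := ℤ) c m (Int.castRingHom ℝ)
      simp only [Int.coe_castRingHom] at e1 e2
      rw [hsplit] at e1
      push_cast at e1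
      rw [e1, e2]
    set φ := m.totient with hφdef
    have hφ : 0 < φ := Nat.totient_pos.mpr hm0
    have key : (((c : ℝ)) ^ p - 1) ^ φ < (p : ℝ) * (((c : ℝ)) + 1) ^ φ := by
      calc (((c : ℝ)) ^ p - 1) ^ φ < (cyclotomic m ℝ).eval (((c : ℝ)) ^ p) := hlow
        _ = (p : ℝ) * (cyclotomic m ℝ).eval ((c : ℝ)) := hcast
        _ ≤ (p : ℝ) * (((c : ℝ)) + 1) ^ φ := by
            apply mul_le_mul_of_nonneg_left hup
            positivity
    set X : ℝ := ((c : ℝ)) ^ (p - 2) * (((c : ℝ)) - 1) with hXdef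
    have hcge : (2 : ℝ) ≤ (c : ℝ) := by exact_mod_cast hc2
    have hpow1 : (1 : ℝ) ≤ ((c : ℝ)) ^ (p - 2) := one_le_pow₀ (by linarith)
    have hX1 : (1 : ℝ) ≤ X := by
      rw [hXdef]
      have h1 : (1:ℝ) * 1 ≤ ((c : ℝ)) ^ (p - 2) * (((c : ℝ)) - 1) :=
        mul_le_mul hpow1 (by linarith) (by norm_num) (by linarith)
      linarith
    have hfac : (((c : ℝ)) + 1) * X ≤ ((c : ℝ)) ^ p - 1 := by
      have hsp : ((c : ℝ)) ^ (p - 2) * ((c : ℝ)) ^ 2 = ((c : ℝ)) ^ p := by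
        rw [← pow_add]; congr 1; omega
      have expand : (((c : ℝ)) + 1) * (((c : ℝ)) ^ (p - 2) * (((c : ℝ)) - 1))
          = ((c : ℝ)) ^ (p - 2) * ((c : ℝ)) ^ 2 - ((c : ℝ)) ^ (p - 2) := by ring
      rw [hXdef, expand, hsp]
      linarith
    have hXp : X ^ φ < (p : ℝ) := by
      have h1 : ((((c : ℝ)) + 1) * X) ^ φ ≤ (((c : ℝ)) ^ p - 1) ^ φ := by
        apply pow_le_pow_left₀ (by positivity) hfac
      rw [mul_pow] at h1
      have h3 : (0 : ℝ) < (((c : ℝ)) + 1) ^ φ := by positivity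
      have h2 : (((c : ℝ)) + 1) ^ φ * X ^ φ < (((c : ℝ)) + 1) ^ φ * (p : ℝ) := by
        calc (((c : ℝ)) + 1) ^ φ * X ^ φ ≤ (((c : ℝ)) ^ p - 1) ^ φ := h1
          _ < (p : ℝ) * (((c : ℝ)) + 1) ^ φ := key
          _ = (((c : ℝ)) + 1) ^ φ * (p : ℝ) := by ring
      exact (mul_lt_mul_iff_right₀ h3).mp h2
    have hXlt : X < (p : ℝ) := lt_of_le_of_lt (le_self_pow₀ hX1 hφ.ne') hXp
    have hXZ : (c : ℤ) ^ (p - 2) * (c - 1) < (p : ℤ) := by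
      have : ((c ^ (p - 2) * (c - 1) : ℤ) : ℝ) = X := by push_cast; ring
      exact_mod_cast this ▸ hXlt
    rcases eq_or_lt_of_le hc2 with hc2' | hc3
    · -- c = 2
      have hb2 : b = 2 := by omega
      have hkk : k = 1 := by
        by_contra hkk
        have hk2 : 2 ≤ k := by omega
        have h8 : 3 ≤ p ^ (k - 1) := le_trans hp3 (Nat.le_self_pow (by omega) p)
        have : (2 : ℤ) ^ (3 : ℕ) ≤ b ^ (p ^ (k - 1)) := by
          calc (2 : ℤ) ^ (3:ℕ) ≤ (2:ℤ) ^ (p ^ (k-1)) := pow_le_pow_right₀ (by norm_num) h8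
            _ ≤ b ^ (p ^ (k - 1)) := pow_le_pow_left₀ (by norm_num) hb _
        rw [← hcdef] at this
        norm_num at this
        omega
      have hp2lt : (2 : ℤ) ^ (p - 2) < (p : ℤ) := by
        rw [← hc2'] at hXZ
        norm_num at hXZ
        linarith [hXZ]
      have hple3 : p ≤ 3 := by
        by_contra hgt
        have hp4 : 4 ≤ p := by omega
        have h := aux_pow2 (p - 4)
        have e1 : p - 4 + 2 = p - 2 := by omega
        have e2 : p - 4 + 4 = p := by omega
        rw [e1, e2] at h
        have : ((p : ℤ)) ≤ (2 : ℤ) ^ (p - 2) := by exact_mod_cast h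
        linarith
      have hpeq3 : p = 3 := by omega
      have hm2' : m = 2 := by
        have := Nat.le_of_dvd (by omega) hmdvd
        rw [hpeq3] at this
        omega
      have hd6 : d = 6 := by rw [← hdkm, hkk, hm2', hpeq3]; norm_num
      exact h2 ⟨hb2, hd6⟩
    · -- c ≥ 3
      have h3c : (3 : ℤ) ≤ c := hc3
      have h3p : (3 : ℤ) ^ (p - 2) * 2 ≤ c ^ (p - 2) * (c - 1) := by
        have h1 : (3 : ℤ) ^ (p - 2) ≤ c ^ (p - 2) := pow_le_pow_left₀ (by norm_num) h3c _
        have h2 : (2 : ℤ) ≤ c - 1 := by omega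
        exact mul_le_mul h1 h2 (by norm_num) (pow_nonneg (by omega) _)
      have hnat : p ≤ 2 * 3 ^ (p - 2) := by
        have h := aux_pow3 (p - 2)
        have e1 : p - 2 + 2 = p := by omega
        rw [e1] at h
        exact h
      have hcastp : ((p : ℤ)) ≤ 2 * 3 ^ (p - 2) := by exact_mod_cast hnat
      linarith
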